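/- Let f(x_1,…,x_α; y) be a polynomial, where f is obtained from a polynomial F(x_1,…,x_α; y_1,…,y_β) symmetric in the y variables that vanishes whenever x_i = y_j = y_t (j ≠ t), by setting all y variables equal to y: f = F(x_1,…,x_α; y,…,y). Then for each i, (∂/∂y)^s f vanishes on x_i = y for s = 0, 1, …, β−2; consequently f is divisible by ∏_{i=1}^α (x_i − y)^{β−1}. -/

import Mathlib

open MvPolynomial

namespace Stmt17Aux

variable {σ : Type*} [DecidableEq σ]

lemma aeval_X_eq_rename {τ : Type*} (φ : σ → τ) (q : MvPolynomial σ ℚ) :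
    aeval (fun v => (X (φ v) : MvPolynomial τ ℚ)) q = rename φ q := by
  induction q using MvPolynomial.induction_on <;> simp_all

/-- Chain rule for `pderiv` along a variable substitution `rename g`. -/
lemma pderiv_rename_sum [Fintype σ] (g : σ → σ) (k : σ) (p : MvPolynomial σ ℚ) :
    pderiv k (rename g p) = ∑ v : σ, if g v = k then rename g (pderiv v p) else 0 := by
  induction p using MvPolynomial.induction_on with
  | C a => simp
  | add p q hp hq =>
    simp only [map_add, hp, hq, ← Finset.sum_add_distrib]
    refine Finset.sum_congr rfl fun v _ => ?_
    split <;> simp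
  | mul_X p n hp =>
    rw [map_mul, rename_X, pderiv_mul, hp, pderiv_X]
    have h2 : ∀ v : σ, (if g v = k then rename g (pderiv v (p * X n)) else 0)
        = (if g v = k then rename g (pderiv v p) else 0) * X (g n)
          + (if v = n then (if g v = k then rename g p else 0) else 0) := by
      intro v
      by_cases h' : v = n
      · subst h'
        by_cases h : g v = k <;> simp [pderiv_mul, Pi.single_apply, h] <;> ring
      · by_cases h : g v = k <;> simp [pderiv_mul, Pi.single_apply, h, h'] <;> ring
    rw [Finset.sum_congr rfl fun v _ => h2 v, Finset.sum_add_distrib,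
      ← Finset.sum_mul, Finset.sum_ite_eq' Finset.univ n
        (fun v => if g v = k then rename g p else 0), if_pos (Finset.mem_univ n)]
    by_cases h : g n = k <;> simp [h, Pi.single_apply]

lemma pderiv_rename_of_unique [Fintype σ] {g : σ → σ} {k : σ}
    (h : ∀ v, g v = k ↔ v = k) (Q : MvPolynomial σ ℚ) :
    pderiv k (rename g Q) = rename g (pderiv k Q) := by
  rw [pderiv_rename_sum]
  simp only [h]
  simp [Finset.sum_ite_eq']


lemma rename_collapse_X_sub (v w : σ) :
    rename (fun u => if u = v then w else u) ((X v - X w : MvPolynomial σ ℚ)) = 0 := by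
  rw [map_sub, rename_X, rename_X, if_pos rfl]
  split <;> simp

lemma iter_pderiv_pow_mul {v w : σ} (hvw : v ≠ w) :
    ∀ (n : ℕ) (h : MvPolynomial σ ℚ),
      rename (fun u => if u = v then w else u)
        ((⇑(pderiv w))^[n] ((X v - X w) ^ n * h))
      = C ((-1) ^ n * (n.factorial : ℚ)) *
          rename (fun u => if u = v then w else u) h := by
  intro n
  induction n with
  | zero => intro h; simp
  | succ n ih =>
    intro h
    have hd : pderiv w ((X v - X w : MvPolynomial σ ℚ)) = -1 := by
      rw [map_sub, pderiv_X_of_ne hvw, pderiv_X_self]; ring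
    have e1 : pderiv w ((X v - X w) ^ (n + 1) * h)
        = (X v - X w) ^ n * (C (-((n : ℚ) + 1)) * h + (X v - X w) * pderiv w h) := by
      rw [pderiv_mul, pderiv_pow, hd, Nat.add_sub_cancel]
      have hC : (C (-((n : ℚ) + 1)) : MvPolynomial σ ℚ) = -((n : MvPolynomial σ ℚ) + 1) := by
        rw [map_neg, map_add, map_one, map_natCast]
      rw [hC]
      push_cast
      ring
    rw [Function.iterate_succ_apply, e1, ih]
    simp only [map_add, map_mul, rename_C, rename_collapse_X_sub, zero_mul, add_zero]
    have hsc : ((-1 : ℚ) ^ n * (n.factorial : ℚ)) * (-((n : ℚ) + 1))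
        = (-1) ^ (n + 1) * ((n + 1).factorial : ℚ) := by
      push_cast [Nat.factorial_succ]
      ring
    rw [← mul_assoc, ← C_mul, ← C_mul, hsc, C_mul]

lemma dvd_sub_rename (v w : σ) (q : MvPolynomial σ ℚ) :
    (X v - X w) ∣ q - rename (fun u => if u = v then w else u) q := by
  induction q using MvPolynomial.induction_on with
  | C a => simp
  | add p q hp hq =>
    rw [map_add]
    have := dvd_add hp hq
    convert this using 1
    ring
  | mul_X p n hp =>
    rw [map_mul, rename_X]
    have e : p * X n - rename (fun u => if u = v then w else u) p *
          X (if n = v then w else n)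
        = (p - rename (fun u => if u = v then w else u) p) * X n
          + rename (fun u => if u = v then w else u) p *
            (X n - X (if n = v then w else n)) := by ring
    rw [e]
    refine dvd_add (hp.mul_right _) (Dvd.dvd.mul_left ?_ _)
    by_cases h : n = v
    · subst h; simp
    · simp [h]

lemma dvd_of_pderiv_vanish {v w : σ} (hvw : v ≠ w) (f : MvPolynomial σ ℚ) (n : ℕ)
    (h : ∀ s, s < n →
      rename (fun u => if u = v then w else u) ((⇑(pderiv w))^[s] f) = 0) :
    (X v - X w) ^ n ∣ f := by
  induction n with
  | zero => simp
  | succ n ih =>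
    obtain ⟨g, rfl⟩ := ih fun s hs => h s (hs.trans (Nat.lt_succ_self n))
    have hM := iter_pderiv_pow_mul hvw n g
    rw [h n (Nat.lt_succ_self n)] at hM
    have hc : ((-1 : ℚ) ^ n * (n.factorial : ℚ)) ≠ 0 :=
      mul_ne_zero (pow_ne_zero _ (by norm_num))
        (Nat.cast_ne_zero.mpr n.factorial_ne_zero)
    have hg0 : rename (fun u => if u = v then w else u) g = 0 := by
      rcases mul_eq_zero.mp hM.symm with h0 | h0
      · exact absurd (by simpa using h0) hc
      · exact h0
    obtain ⟨k, hk⟩ := dvd_sub_rename v w g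
    rw [hg0, sub_zero] at hk
    exact ⟨k, by rw [pow_succ, hk]; ring⟩

lemma prime_X_sub_X {v w : σ} (hvw : v ≠ w) :
    Prime ((X v - X w : MvPolynomial σ ℚ)) := by
  classical
  let e := (renameEquiv ℚ ((Equiv.optionSubtypeNe v).symm)).trans
    (optionEquivLeft ℚ {b : σ // b ≠ v})
  refine (MulEquiv.prime_iff e.toMulEquiv).mp ?_
  have he : e.toMulEquiv (X v - X w)
      = (Polynomial.X - Polynomial.C (X ⟨w, Ne.symm hvw⟩) :
          Polynomial (MvPolynomial {b : σ // b ≠ v} ℚ)) := by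
    show e (X v - X w) = _
    simp only [e, AlgEquiv.trans_apply, renameEquiv_apply, map_sub, rename_X,
      Equiv.optionSubtypeNe_symm_self, Equiv.optionSubtypeNe_symm_of_ne (Ne.symm hvw),
      optionEquivLeft_X_none, optionEquivLeft_X_some]
  rw [he]
  exact Polynomial.prime_X_sub_C _

lemma prod_pow_dvd {ι : Type*} [DecidableEq ι] (s : Finset ι)
    (p : ι → MvPolynomial σ ℚ) (hp : ∀ i ∈ s, Prime (p i))
    (hnd : ∀ i ∈ s, ∀ j ∈ s, i ≠ j → ¬ p i ∣ p j) (k : ℕ) :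
    ∀ f : MvPolynomial σ ℚ, (∀ i ∈ s, p i ^ k ∣ f) → (∏ i ∈ s, p i ^ k) ∣ f := by
  classical
  induction s using Finset.induction_on with
  | empty => simp
  | @insert a s ha ih =>
    intro f h
    obtain ⟨g, rfl⟩ := h a (Finset.mem_insert_self a s)
    rw [Finset.prod_insert ha]
    have hg : ∀ i ∈ s, p i ^ k ∣ g := by
      intro i hi
      have hia : i ≠ a := fun hia => ha (hia ▸ hi)
      refine (hp i (Finset.mem_insert_of_mem hi)).pow_dvd_of_dvd_mul_left k ?_
        (h i (Finset.mem_insert_of_mem hi))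
      intro hdvd
      exact hnd i (Finset.mem_insert_of_mem hi) a (Finset.mem_insert_self a s) hia
        ((hp i (Finset.mem_insert_of_mem hi)).dvd_of_dvd_pow hdvd)
    exact mul_dvd_mul_left _ (ih (fun i hi => hp i (Finset.mem_insert_of_mem hi))
      (fun i hi j hj => hnd i (Finset.mem_insert_of_mem hi) j (Finset.mem_insert_of_mem hj))
      g hg)


variable {α β : ℕ}

noncomputable def D (l : List (Fin β)) (Q : MvPolynomial (Fin α ⊕ Fin β) ℚ) :
    MvPolynomial (Fin α ⊕ Fin β) ℚ :=
  l.foldr (fun j q => pderiv (Sum.inr j) q) Q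

lemma D_cons (j : Fin β) (l : List (Fin β)) (Q : MvPolynomial (Fin α ⊕ Fin β) ℚ) :
    D (j :: l) Q = pderiv (Sum.inr j) (D l Q) := rfl

lemma D_zero (l : List (Fin β)) : D (α := α) l 0 = 0 := by
  induction l with
  | nil => rfl
  | cons j l ih => rw [D_cons, ih, map_zero]

lemma D_rename_comm (p : Fin α ⊕ Fin β → Fin α ⊕ Fin β) (l : List (Fin β))
    (hp : ∀ m ∈ l, ∀ v, p v = Sum.inr m ↔ v = Sum.inr m)
    (Q : MvPolynomial (Fin α ⊕ Fin β) ℚ) :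
    D l (rename p Q) = rename p (D l Q) := by
  induction l with
  | nil => rfl
  | cons j l ih =>
    rw [D_cons, D_cons, ih (fun m hm => hp m (List.mem_cons_of_mem _ hm)),
      pderiv_rename_of_unique (hp j List.mem_cons_self)]

lemma pderiv_diag (y0 : Fin β) (Q : MvPolynomial (Fin α ⊕ Fin β) ℚ) :
    pderiv (Sum.inr y0) (rename (Sum.elim Sum.inl fun _ => Sum.inr y0) Q)
      = ∑ j : Fin β, rename (Sum.elim Sum.inl fun _ => Sum.inr y0)
          (pderiv (Sum.inr j) Q) := by
  rw [pderiv_rename_sum, Fintype.sum_sum_type]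
  simp

lemma iter_mem_span (F : MvPolynomial (Fin α ⊕ Fin β) ℚ) (y0 : Fin β) (s : ℕ) :
    (⇑(pderiv (Sum.inr y0)))^[s] (rename (Sum.elim Sum.inl fun _ => Sum.inr y0) F)
      ∈ Submodule.span ℚ {Q : MvPolynomial (Fin α ⊕ Fin β) ℚ |
          ∃ l : List (Fin β), l.length = s ∧
            Q = rename (Sum.elim Sum.inl fun _ => Sum.inr y0) (D l F)} := by
  induction s with
  | zero => exact Submodule.subset_span ⟨[], rfl, rfl⟩
  | succ s ih =>
    rw [Function.iterate_succ_apply']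
    have hmap : Submodule.map
        ((pderiv (Sum.inr y0)).toLinearMap :
          MvPolynomial (Fin α ⊕ Fin β) ℚ →ₗ[ℚ] MvPolynomial (Fin α ⊕ Fin β) ℚ)
        (Submodule.span ℚ {Q : MvPolynomial (Fin α ⊕ Fin β) ℚ |
          ∃ l : List (Fin β), l.length = s ∧
            Q = rename (Sum.elim Sum.inl fun _ => Sum.inr y0) (D l F)})
        ≤ Submodule.span ℚ {Q : MvPolynomial (Fin α ⊕ Fin β) ℚ |
          ∃ l : List (Fin β), l.length = s + 1 ∧
            Q = rename (Sum.elim Sum.inl fun _ => Sum.inr y0) (D l F)} := by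
      rw [Submodule.map_span, Submodule.span_le]
      rintro _ ⟨Q, ⟨l, hl, rfl⟩, rfl⟩
      show pderiv (Sum.inr y0) (rename _ (D l F)) ∈ _
      rw [pderiv_diag]
      exact Submodule.sum_mem _ fun j _ => Submodule.subset_span
        ⟨j :: l, by simp [hl], by rw [D_cons]⟩
    exact hmap (Submodule.mem_map_of_mem ih)

lemma gen_vanish (F : MvPolynomial (Fin α ⊕ Fin β) ℚ)
    (i : Fin α) (y0 : Fin β) (l : List (Fin β)) {j t : Fin β}
    (hj : j ∉ l) (ht : t ∉ l)
    (hF : rename (fun v => if v = Sum.inl i ∨ v = Sum.inr t then Sum.inr j else v) F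
      = 0) :
    rename (fun v => if v = Sum.inl i then Sum.inr y0 else v)
      (rename (Sum.elim Sum.inl fun _ => Sum.inr y0) (D l F)) = 0 := by
  set p : Fin α ⊕ Fin β → Fin α ⊕ Fin β :=
    fun v => if v = Sum.inl i ∨ v = Sum.inr t then Sum.inr j else v with hpdef
  have hcomm : ∀ m ∈ l, ∀ v, p v = Sum.inr m ↔ v = Sum.inr m := by
    intro m hm v
    have hmj : m ≠ j := fun h => hj (h ▸ hm)
    have hmt : m ≠ t := fun h => ht (h ▸ hm)
    constructor
    · intro hv
      by_cases hc : v = Sum.inl i ∨ v = Sum.inr t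
      · rw [hpdef] at hv
        simp only [hc, if_true, Sum.inr.injEq] at hv
        exact absurd hv.symm hmj
      · rw [hpdef] at hv
        simpa [hc] using hv
    · rintro rfl
      have hc : ¬ ((Sum.inr m : Fin α ⊕ Fin β) = Sum.inl i ∨
          (Sum.inr m : Fin α ⊕ Fin β) = Sum.inr t) := by simp [hmt]
      show (if ((Sum.inr m : Fin α ⊕ Fin β) = Sum.inl i ∨
          (Sum.inr m : Fin α ⊕ Fin β) = Sum.inr t) then (Sum.inr j : Fin α ⊕ Fin β)
          else Sum.inr m) = Sum.inr m
      rw [if_neg hc]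
  have h0 : rename p (D l F) = 0 := by
    rw [← D_rename_comm p l hcomm, hF, D_zero]
  rw [rename_rename]
  have hfun : ((fun v => if v = Sum.inl i then Sum.inr y0 else v) ∘
      (Sum.elim Sum.inl fun _ => Sum.inr y0))
      = (Sum.elim Sum.inl fun _ => Sum.inr y0) ∘ p := by
    funext v
    rcases v with a | b
    · by_cases h : a = i <;> simp [hpdef, Function.comp, h]
    · simp only [hpdef, Function.comp, Sum.elim_inr]
      have : ¬ ((Sum.inr y0 : Fin α ⊕ Fin β) = Sum.inl i) := by simp
      simp only [this, if_false, ite_self]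
      split <;> simp
  rw [hfun, ← rename_rename, h0, map_zero]

lemma not_dvd_X_sub {i i' : Fin α} (hii : i ≠ i') (y0 : Fin β) :
    ¬ ((X (Sum.inl i) - X (Sum.inr y0) : MvPolynomial (Fin α ⊕ Fin β) ℚ)
      ∣ (X (Sum.inl i') - X (Sum.inr y0))) := by
  intro hdvd
  have h2 := map_dvd
    (eval (fun v : Fin α ⊕ Fin β => if v = Sum.inl i' then (1 : ℚ) else 0)) hdvd
  simp [hii] at h2

end Stmt17Aux

open Stmt17Aux in
/-- let `F(x_1,…,x_α; y_1,…,y_β)` be a polynomial over `ℚ`, symmetric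
in the `y` variables, vanishing on every subvariety `x_i = y_j = y_t` (`j ≠ t`), and
let `f(x; y) := F(x_1,…,x_α; y,…,y)` (all `y` variables set equal to `y := y_1`).
Then for each `i` and each `s = 0,1,…,β−2`, `(∂/∂y)^s f` vanishes on `x_i = y`;
consequently `f` is divisible by `∏_{i=1}^α (x_i − y)^{β−1}`. -/
theorem stmt17 (α β : ℕ) (hβ : 1 ≤ β) (F : MvPolynomial (Fin α ⊕ Fin β) ℚ)
    (hsym : ∀ σ : Equiv.Perm (Fin β), rename (Sum.map id σ) F = F)
    (hvan : ∀ (i : Fin α) (j t : Fin β), j ≠ t →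
      aeval (fun v : Fin α ⊕ Fin β =>
        if v = Sum.inl i ∨ v = Sum.inr t
        then (X (Sum.inr j) : MvPolynomial (Fin α ⊕ Fin β) ℚ)
        else X v) F = 0) :
    (∀ (i : Fin α) (s : ℕ), s + 2 ≤ β →
      aeval (fun v : Fin α ⊕ Fin β =>
        if v = Sum.inl i
        then (X (Sum.inr (⟨0, hβ⟩ : Fin β)) : MvPolynomial (Fin α ⊕ Fin β) ℚ)
        else X v)
        ((⇑(pderiv (Sum.inr (⟨0, hβ⟩ : Fin β))))^[s]
          (aeval (Sum.elim
              (fun i' : Fin α => (X (Sum.inl i') : MvPolynomial (Fin α ⊕ Fin β) ℚ))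
              (fun _ : Fin β => (X (Sum.inr (⟨0, hβ⟩ : Fin β)) : MvPolynomial (Fin α ⊕ Fin β) ℚ)))
            F)) = 0) ∧
    (∏ i : Fin α,
        ((X (Sum.inl i) : MvPolynomial (Fin α ⊕ Fin β) ℚ) -
          X (Sum.inr (⟨0, hβ⟩ : Fin β))) ^ (β - 1)) ∣
      aeval (Sum.elim
          (fun i' : Fin α => (X (Sum.inl i') : MvPolynomial (Fin α ⊕ Fin β) ℚ))
          (fun _ : Fin β => (X (Sum.inr (⟨0, hβ⟩ : Fin β)) : MvPolynomial (Fin α ⊕ Fin β) ℚ)))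
        F := by
  classical
  set y0 : Fin β := ⟨0, hβ⟩ with hy0
  have hdiag : (Sum.elim
        (fun i' : Fin α => (X (Sum.inl i') : MvPolynomial (Fin α ⊕ Fin β) ℚ))
        (fun _ : Fin β => (X (Sum.inr y0) : MvPolynomial (Fin α ⊕ Fin β) ℚ)))
      = fun v => X ((Sum.elim Sum.inl fun _ => Sum.inr y0) v) := by
    funext v; cases v <;> rfl
  have hvan' : ∀ (i : Fin α) (j t : Fin β), j ≠ t →
      rename (fun v => if v = Sum.inl i ∨ v = Sum.inr t then Sum.inr j else v) F = 0 := by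
    intro i j t hjt
    have h1 := hvan i j t hjt
    rw [show (fun v : Fin α ⊕ Fin β =>
        if v = Sum.inl i ∨ v = Sum.inr t
        then (X (Sum.inr j) : MvPolynomial (Fin α ⊕ Fin β) ℚ)
        else X v)
      = fun v => X ((fun v => if v = Sum.inl i ∨ v = Sum.inr t then Sum.inr j else v) v) by
        funext v; split <;> simp_all, aeval_X_eq_rename] at h1
    exact h1
  have key : ∀ (i : Fin α) (s : ℕ), s + 2 ≤ β →
      rename (fun v => if v = Sum.inl i then Sum.inr y0 else v)
        ((⇑(pderiv (Sum.inr y0)))^[s]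
          (rename (Sum.elim Sum.inl fun _ => Sum.inr y0) F)) = 0 := by
    intro i s hs
    have hmem := iter_mem_span F y0 s
    have hle : Submodule.span ℚ {Q : MvPolynomial (Fin α ⊕ Fin β) ℚ |
          ∃ l : List (Fin β), l.length = s ∧
            Q = rename (Sum.elim Sum.inl fun _ => Sum.inr y0) (D l F)}
        ≤ LinearMap.ker
          ((rename (fun v => if v = Sum.inl i then Sum.inr y0 else v)).toLinearMap :
            MvPolynomial (Fin α ⊕ Fin β) ℚ →ₗ[ℚ] MvPolynomial (Fin α ⊕ Fin β) ℚ) := by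
      rw [Submodule.span_le]
      rintro _ ⟨l, hl, rfl⟩
      have hcard : 1 < (l.toFinsetᶜ : Finset (Fin β)).card := by
        have h1 : l.toFinset.card ≤ s := hl ▸ l.toFinset_card_le
        have h2 : (l.toFinsetᶜ : Finset (Fin β)).card = β - l.toFinset.card := by
          rw [Finset.card_compl, Fintype.card_fin]
        omega
      obtain ⟨j, hjmem, t, htmem, hjt⟩ := Finset.one_lt_card.mp hcard
      have hj : j ∉ l := by
        simpa [List.mem_toFinset] using Finset.mem_compl.mp hjmem
      have ht : t ∉ l := by
        simpa [List.mem_toFinset] using Finset.mem_compl.mp htmem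
      show rename (fun v => if v = Sum.inl i then Sum.inr y0 else v) _ = 0
      exact gen_vanish F i y0 l hj ht (hvan' i j t hjt)
    exact hle hmem
  constructor
  · intro i s hs
    rw [hdiag, aeval_X_eq_rename,
      show (fun v : Fin α ⊕ Fin β =>
          if v = Sum.inl i
          then (X (Sum.inr y0) : MvPolynomial (Fin α ⊕ Fin β) ℚ)
          else X v)
        = fun v => X ((fun v => if v = Sum.inl i then Sum.inr y0 else v) v) by
          funext v; split <;> simp_all, aeval_X_eq_rename]
    exact key i s hs
  · rw [hdiag, aeval_X_eq_rename]
    have hdvd : ∀ i : Fin α,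
        ((X (Sum.inl i) : MvPolynomial (Fin α ⊕ Fin β) ℚ) - X (Sum.inr y0)) ^ (β - 1)
          ∣ rename (Sum.elim Sum.inl fun _ => Sum.inr y0) F := by
      intro i
      refine dvd_of_pderiv_vanish (by simp) _ (β - 1) ?_
      intro s hs
      exact key i s (by omega)
    exact prod_pow_dvd Finset.univ
      (fun i => (X (Sum.inl i) : MvPolynomial (Fin α ⊕ Fin β) ℚ) - X (Sum.inr y0))
      (fun i _ => prime_X_sub_X (by simp))
      (fun i _ j _ hij => not_dvd_X_sub hij y0) (β - 1) _ (fun i _ => hdvd i)
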